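/- Let a ∈ ℝ² be a transport vector, let J be a nonempty finite index set, and for each j ∈ J let η_j, s_j ∈ ℝ² be vectors, κ̄_j ≥ 0 and λ̄_j ∈ ℝ. Define c_j = −[ κ̄_j (a·η_j − |a·η_j|) + (λ̄_j (a·s_j) − |λ̄_j (a·s_j)|) ]. Then c_j ≥ 0 for every j ∈ J, and if Δt ≥ 0 satisfies Δt · Σ_{j∈J} c_j ≤ 1, then the update g⁺ = g_i + Δt Σ_{j∈J} c_j (g_j − g_i) satisfies the discrete maximum principle min(g_i, min_{j∈J} g_j) ≤ g⁺ ≤ max(g_i, max_{j∈J} g_j); in particular the first-order two-dimensional scheme is L^∞-stable provided Δt ≤ 1 / Σ_{j∈J} c_j. -/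
import Mathlib


open Finset
open scoped RealInnerProductSpace

/-- The first-order positive meshless scheme in two space dimensions: the coefficients
`c_j = −[κ̄_j (a·η_j − |a·η_j|) + (λ̄_j (a·s_j) − |λ̄_j (a·s_j)|)]` are nonnegative, and
under the time step restriction `Δt Σ c_j ≤ 1` the forward-Euler update satisfies the
discrete maximum principle, hence the scheme is `L^∞`-stable. -/
theorem meshless_2d_first_order_dmp {ι : Type*} (J : Finset ι) (hJ : J.Nonempty)
    (a : EuclideanSpace ℝ (Fin 2)) (η s : ι → EuclideanSpace ℝ (Fin 2))
    (κ lam : ι → ℝ) (hκ : ∀ j ∈ J, 0 ≤ κ j)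
    (c : ι → ℝ)
    (hc : ∀ j, c j =
      -(κ j * (⟪a, η j⟫ - |⟪a, η j⟫|) + (lam j * ⟪a, s j⟫ - |lam j * ⟪a, s j⟫|)))
    (gi Δt : ℝ) (g : ι → ℝ) (hΔt0 : 0 ≤ Δt) :
    (∀ j ∈ J, 0 ≤ c j) ∧
    (Δt * ∑ j ∈ J, c j ≤ 1 →
      min gi (J.inf' hJ g) ≤ gi + Δt * ∑ j ∈ J, c j * (g j - gi) ∧
      gi + Δt * ∑ j ∈ J, c j * (g j - gi) ≤ max gi (J.sup' hJ g)) := by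
  have hcpos : ∀ j ∈ J, 0 ≤ c j := by
    intro j hj
    rw [hc j]
    have h1 : ⟪a, η j⟫ - |⟪a, η j⟫| ≤ 0 := sub_nonpos.mpr (le_abs_self _)
    have h2 : lam j * ⟪a, s j⟫ - |lam j * ⟪a, s j⟫| ≤ 0 :=
      sub_nonpos.mpr (le_abs_self _)
    have := mul_nonpos_of_nonneg_of_nonpos (hκ j hj) h1
    nlinarith
  refine ⟨hcpos, fun hCFL => ?_⟩
  set m := min gi (J.inf' hJ g) with hm
  set M := max gi (J.sup' hJ g) with hM
  have hmi : m ≤ gi := min_le_left _ _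
  have hMi : gi ≤ M := le_max_left _ _
  have hS : 0 ≤ ∑ j ∈ J, c j := Finset.sum_nonneg hcpos
  constructor
  · have h1 : ∀ j ∈ J, c j * (m - gi) ≤ c j * (g j - gi) := by
      intro j hj
      have : m ≤ g j := le_trans (min_le_right _ _) (Finset.inf'_le _ hj)
      have := hcpos j hj
      nlinarith
    have h2 : (∑ j ∈ J, c j) * (m - gi) ≤ ∑ j ∈ J, c j * (g j - gi) := by
      calc (∑ j ∈ J, c j) * (m - gi) = ∑ j ∈ J, c j * (m - gi) := by
            rw [Finset.sum_mul]
        _ ≤ ∑ j ∈ J, c j * (g j - gi) := Finset.sum_le_sum h1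
    have h3 : Δt * ((∑ j ∈ J, c j) * (m - gi)) ≤ Δt * ∑ j ∈ J, c j * (g j - gi) :=
      mul_le_mul_of_nonneg_left h2 hΔt0
    nlinarith [mul_nonneg hΔt0 hS]
  · have h1 : ∀ j ∈ J, c j * (g j - gi) ≤ c j * (M - gi) := by
      intro j hj
      have : g j ≤ M := le_trans (Finset.le_sup' _ hj) (le_max_right _ _)
      have := hcpos j hj
      nlinarith
    have h2 : ∑ j ∈ J, c j * (g j - gi) ≤ (∑ j ∈ J, c j) * (M - gi) := by
      calc ∑ j ∈ J, c j * (g j - gi) ≤ ∑ j ∈ J, c j * (M - gi) := Finset.sum_le_sum h1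
        _ = (∑ j ∈ J, c j) * (M - gi) := by rw [Finset.sum_mul]
    have h3 : Δt * ∑ j ∈ J, c j * (g j - gi) ≤ Δt * ((∑ j ∈ J, c j) * (M - gi)) :=
      mul_le_mul_of_nonneg_left h2 hΔt0
    nlinarith [mul_nonneg hΔt0 hS]
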